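/- Let 1 ≤ p < q < ∞ and d ≥ 1. The Morrey space M^p_q(ℝ^d) is not uniformly non-octahedral: for every δ > 0 there exist F, K, U ∈ M^p_q with ‖F‖ = ‖K‖ = ‖U‖ = 1 such that ‖F ± K ± U‖ > 3(1 − δ) for all four choices of signs. -/

import Mathlib

open MeasureTheory Metric ENNReal

/-- The small Morrey norm: sup over centers `a` and radii `R ∈ (0,1)` of
`|B(a,R)|^(1/q-1/p) (∫_{B(a,R)} |f|^p)^(1/p)`, valued in `ℝ≥0∞`. -/
noncomputable def smallMorreyNorm (d : ℕ) (p q : ℝ)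
    (f : EuclideanSpace ℝ (Fin d) → ℝ) : ℝ≥0∞ :=
  ⨆ (a : EuclideanSpace ℝ (Fin d)) (R : ℝ) (_ : 0 < R) (_ : R < 1),
    volume (ball a R) ^ (1 / q - 1 / p) *
      (∫⁻ y in ball a R, ENNReal.ofReal (|f y| ^ p)) ^ (1 / p)

/-- The (classical) Morrey norm: sup over all centers `a` and radii `R > 0`. -/
noncomputable def morreyNorm (d : ℕ) (p q : ℝ)
    (f : EuclideanSpace ℝ (Fin d) → ℝ) : ℝ≥0∞ :=
  ⨆ (a : EuclideanSpace ℝ (Fin d)) (R : ℝ) (_ : 0 < R),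
    volume (ball a R) ^ (1 / q - 1 / p) *
      (∫⁻ y in ball a R, ENNReal.ofReal (|f y| ^ p)) ^ (1 / p)

lemma my_rpow_anti {a b : ℝ≥0∞} (hab : a ≤ b) {z : ℝ} (hz : z ≤ 0) :
    b ^ z ≤ a ^ z := by
  have : b ^ (-(-z)) ≤ a ^ (-(-z)) := by
    rw [ENNReal.rpow_neg b (-z), ENNReal.rpow_neg a (-z)]
    exact ENNReal.inv_le_inv.2 (ENNReal.rpow_le_rpow hab (neg_nonneg.2 hz))
  simpa using this

lemma my_rpow_fact {c p : ℝ} (hc : 0 ≤ c) (hp : 0 < p) (m : ℝ≥0∞) :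
    (ENNReal.ofReal (c ^ p) * m) ^ (1/p) = ENNReal.ofReal c * m ^ (1/p) := by
  rw [ENNReal.mul_rpow_of_nonneg _ _ (by positivity), ← ENNReal.ofReal_rpow_of_nonneg hc hp.le,
    ← ENNReal.rpow_mul, mul_one_div_cancel hp.ne', ENNReal.rpow_one]

lemma my_om_fact {p q : ℝ} (ω : ℝ≥0∞) (hω : ω ≠ 0) (hω' : ω ≠ ⊤) :
    ω ^ (1/q - 1/p) * ω ^ (1/p) = ω ^ (1/q) := by
  rw [← ENNReal.rpow_add _ _ hω hω']; ring_nf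

lemma exists_R0 (d : ℕ) (p q : ℝ) (hp : 1 ≤ p) (hpq : p < q) (hd : 1 ≤ d) :
    ∃ R₀ : ℝ, 1 ≤ R₀ ∧ ENNReal.ofReal (R₀ ^ d) ^ (1/q - 1/p) * (4:ℝ≥0∞) ^ (1/p) ≤ 1 := by
  have hp0 : 0 < p := lt_of_lt_of_le one_pos hp
  have hq0 : 0 < q := hp0.trans hpq
  have hβ : 0 < (d:ℝ) * (1/p - 1/q) := by
    have h1 : 1/q < 1/p := one_div_lt_one_div_of_lt hp0 hpq
    have : (1:ℝ) ≤ (d:ℝ) := by exact_mod_cast hd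
    nlinarith
  set β := (d:ℝ) * (1/p - 1/q) with hβdef
  set A : ℝ := 4 ^ (1/(p*β)) with hA
  have hA0 : 0 < A := Real.rpow_pos_of_pos (by norm_num) _
  refine ⟨max 1 A, le_max_left _ _, ?_⟩
  set R₀ := max 1 A with hR₀def
  have hR₀1 : 1 ≤ R₀ := le_max_left _ _
  have hR₀0 : 0 < R₀ := lt_of_lt_of_le one_pos hR₀1
  -- real inequality  (R₀^d)^(1/q-1/p) * 4^(1/p) ≤ 1
  have hX : (4:ℝ) ^ (1/p) ≤ (R₀ ^ d) ^ (1/p - 1/q) := by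
    have h1 : (R₀ ^ d : ℝ) = R₀ ^ (d:ℝ) := (Real.rpow_natCast R₀ d).symm
    rw [h1, ← Real.rpow_mul hR₀0.le, ← hβdef]
    have hAβ : A ^ β = 4 ^ (1/p) := by
      rw [hA, ← Real.rpow_mul (by norm_num : (0:ℝ) ≤ 4)]
      congr 1
      field_simp
    calc (4:ℝ) ^ (1/p) = A ^ β := hAβ.symm
      _ ≤ R₀ ^ β := Real.rpow_le_rpow hA0.le (le_max_right _ _) hβ.le
  -- now transfer to ENNReal
  have hpow0 : (0:ℝ) < R₀ ^ d := by positivity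
  have h4 : (4:ℝ≥0∞) = ENNReal.ofReal 4 := by norm_num
  rw [h4, ENNReal.ofReal_rpow_of_pos hpow0, ENNReal.ofReal_rpow_of_pos (by norm_num),
    ← ENNReal.ofReal_mul (by positivity)]
  rw [show (1:ℝ≥0∞) = ENNReal.ofReal 1 by norm_num]
  apply ENNReal.ofReal_le_ofReal
  have hXpos : (0:ℝ) < (R₀ ^ d) ^ (1/p - 1/q) := Real.rpow_pos_of_pos hpow0 _
  have hneg : (R₀ ^ d : ℝ) ^ (1/q - 1/p) = ((R₀ ^ d) ^ (1/p - 1/q))⁻¹ := by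
    rw [show (1/q - 1/p) = -(1/p - 1/q) by ring, Real.rpow_neg hpow0.le]
  rw [hneg]
  rw [inv_mul_le_iff₀ hXpos, mul_one]
  exact hX

lemma morrey_norm_eq_one (d : ℕ) (p q : ℝ) (hp : 1 ≤ p) (hpq : p < q) (hd : 1 ≤ d)
    (R₀ : ℝ) (hR₀1 : 1 ≤ R₀)
    (hR₀' : ENNReal.ofReal (R₀ ^ d) ^ (1/q - 1/p) * (4:ℝ≥0∞) ^ (1/p) ≤ 1)
    (c : Fin 4 → EuclideanSpace ℝ (Fin d))
    (hsep : ∀ i j, i ≠ j → 2*R₀ + 2 ≤ dist (c i) (c j))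
    (ε : ℝ) (hε : 0 < ε)
    (hεω : ENNReal.ofReal ε * (volume (ball (0:EuclideanSpace ℝ (Fin d)) 1)) ^ (1/q) = 1)
    (f : EuclideanSpace ℝ (Fin d) → ℝ)
    (hf : ∀ x, |f x| = ε * Set.indicator (⋃ i, ball (c i) 1) 1 x) :
    morreyNorm d p q f = 1 := by
  haveI : NeZero d := ⟨by omega⟩
  have hp0 : 0 < p := lt_of_lt_of_le one_pos hp
  have hq0 : 0 < q := hp0.trans hpq
  have he : 1/q - 1/p ≤ 0 := by
    have := one_div_lt_one_div_of_lt hp0 hpq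
    linarith
  set ω := volume (ball (0:EuclideanSpace ℝ (Fin d)) 1) with hωdef
  have ω0 : ω ≠ 0 := (measure_ball_pos _ _ one_pos).ne'
  have ωt : ω ≠ ⊤ := measure_ball_lt_top.ne
  set S := ⋃ i, ball (c i) 1 with hSdef
  have hS : MeasurableSet S := MeasurableSet.iUnion fun i => measurableSet_ball
  have hvol : ∀ (a : EuclideanSpace ℝ (Fin d)) (R : ℝ), 0 ≤ R →
      volume (ball a R) = ENNReal.ofReal (R ^ d) * ω := by
    intro a R hR
    rw [Measure.addHaar_ball volume a hR, finrank_euclideanSpace_fin]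
  have hint : ∀ (a : EuclideanSpace ℝ (Fin d)) (R : ℝ),
      (∫⁻ y in ball a R, ENNReal.ofReal (|f y| ^ p)) =
        ENNReal.ofReal (ε ^ p) * volume (S ∩ ball a R) := by
    intro a R
    have hpt : ∀ y, ENNReal.ofReal (|f y| ^ p) =
        S.indicator (fun _ => ENNReal.ofReal (ε ^ p)) y := by
      intro y
      by_cases hy : y ∈ S
      · rw [Set.indicator_of_mem hy, hf y, Set.indicator_of_mem hy, Pi.one_apply, mul_one]
      · rw [Set.indicator_of_notMem hy, hf y, Set.indicator_of_notMem hy, mul_zero,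
          Real.zero_rpow hp0.ne', ENNReal.ofReal_zero]
    simp only [hpt]
    rw [lintegral_indicator_const hS, Measure.restrict_apply hS]
  have key : ∀ (a : EuclideanSpace ℝ (Fin d)) (R : ℝ), 0 < R →
      volume (ball a R) ^ (1/q - 1/p) *
        (∫⁻ y in ball a R, ENNReal.ofReal (|f y| ^ p)) ^ (1/p) ≤ 1 := by
    intro a R hR
    rw [hint a R, my_rpow_fact hε.le hp0]
    set m := volume (S ∩ ball a R) with hm
    set vR := volume (ball a R) with hvR
    have hvR0 : vR ≠ 0 := (measure_ball_pos _ _ hR).ne'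
    have hvRt : vR ≠ ⊤ := measure_ball_lt_top.ne
    rcases le_or_gt R R₀ with hcase | hcase
    · -- small radius: the ball meets at most one of the four balls
      have hone : ∃ i, S ∩ ball a R ⊆ ball (c i) 1 := by
        by_cases hne : (S ∩ ball a R).Nonempty
        · obtain ⟨z, hzS, hza⟩ := hne
          obtain ⟨i, hzi⟩ := Set.mem_iUnion.1 hzS
          refine ⟨i, fun w hw => ?_⟩
          obtain ⟨hwS, hwa⟩ := hw
          obtain ⟨j, hwj⟩ := Set.mem_iUnion.1 hwS
          rcases eq_or_ne j i with rfl | hij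
          · exact hwj
          · exfalso
            have h4 := dist_triangle4 (c i) z w (c j)
            rw [mem_ball] at hzi hwj hza hwa
            rw [dist_comm (c i) z] at h4
            have hzw : dist z w ≤ dist z a + dist w a := by
              rw [dist_comm w a]; exact dist_triangle z a w
            have := hsep i j (Ne.symm hij)
            linarith
        · rw [Set.not_nonempty_iff_eq_empty] at hne
          exact ⟨0, by rw [hne]; exact Set.empty_subset _⟩
      obtain ⟨i, hi⟩ := hone
      rcases le_or_gt R 1 with hR1 | hR1
      · have hmv : m ≤ vR := measure_mono Set.inter_subset_right
        have hvω : vR ≤ ω := by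
          rw [hvR, hvol a R hR.le]
          calc ENNReal.ofReal (R ^ d) * ω ≤ 1 * ω := by
                gcongr
                rw [show (1:ℝ≥0∞) = ENNReal.ofReal 1 by norm_num]
                exact ENNReal.ofReal_le_ofReal (pow_le_one₀ hR.le hR1)
            _ = ω := one_mul ω
        calc vR ^ (1/q - 1/p) * (ENNReal.ofReal ε * m ^ (1/p))
            = ENNReal.ofReal ε * (vR ^ (1/q - 1/p) * m ^ (1/p)) := by ring
          _ ≤ ENNReal.ofReal ε * (vR ^ (1/q - 1/p) * vR ^ (1/p)) := by
              gcongr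
          _ = ENNReal.ofReal ε * vR ^ (1/q) := by rw [my_om_fact vR hvR0 hvRt]
          _ ≤ ENNReal.ofReal ε * ω ^ (1/q) := by
              gcongr
          _ = 1 := hεω
      · have hmω : m ≤ ω := by
          calc m ≤ volume (ball (c i) 1) := measure_mono hi
            _ = ω := by rw [hvol (c i) 1 zero_le_one, one_pow, ENNReal.ofReal_one, one_mul]
        have hωv : ω ≤ vR := by
          rw [hvR, hvol a R hR.le]
          calc ω = 1 * ω := (one_mul ω).symm
            _ ≤ ENNReal.ofReal (R ^ d) * ω := by
                gcongr
                rw [show (1:ℝ≥0∞) = ENNReal.ofReal 1 by norm_num]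
                exact ENNReal.ofReal_le_ofReal (one_le_pow₀ hR1.le)
        calc vR ^ (1/q - 1/p) * (ENNReal.ofReal ε * m ^ (1/p))
            ≤ vR ^ (1/q - 1/p) * (ENNReal.ofReal ε * ω ^ (1/p)) := by
              gcongr
          _ ≤ ω ^ (1/q - 1/p) * (ENNReal.ofReal ε * ω ^ (1/p)) :=
              mul_le_mul_left (my_rpow_anti hωv he) _
          _ = ENNReal.ofReal ε * (ω ^ (1/q - 1/p) * ω ^ (1/p)) := by ring
          _ = ENNReal.ofReal ε * ω ^ (1/q) := by rw [my_om_fact ω ω0 ωt]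
          _ = 1 := hεω
    · -- large radius: m ≤ 4ω
      have hm4 : m ≤ 4 * ω := by
        calc m ≤ volume S := measure_mono Set.inter_subset_left
          _ ≤ ∑' i : Fin 4, volume (ball (c i) 1) := measure_iUnion_le _
          _ = ∑' _ : Fin 4, ω := by
              congr 1
              funext i
              rw [hvol (c i) 1 zero_le_one, one_pow, ENNReal.ofReal_one, one_mul]
          _ = 4 * ω := by
              rw [tsum_fintype]
              simp [Finset.sum_const, Fintype.card_fin]
      have hvRb : ENNReal.ofReal (R₀ ^ d) * ω ≤ vR := by
        rw [hvR, hvol a R hR.le]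
        gcongr
      have hR₀ω0 : ENNReal.ofReal (R₀ ^ d) * ω ≠ 0 := by
        apply mul_ne_zero _ ω0
        simp only [ne_eq, ENNReal.ofReal_eq_zero, not_le]
        positivity
      calc vR ^ (1/q - 1/p) * (ENNReal.ofReal ε * m ^ (1/p))
          ≤ vR ^ (1/q - 1/p) * (ENNReal.ofReal ε * (4 * ω) ^ (1/p)) := by
            gcongr
        _ ≤ (ENNReal.ofReal (R₀ ^ d) * ω) ^ (1/q - 1/p) *
              (ENNReal.ofReal ε * (4 * ω) ^ (1/p)) :=
            mul_le_mul_left (my_rpow_anti hvRb he) _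
        _ = (ENNReal.ofReal ε * ω ^ (1/q)) *
              (ENNReal.ofReal (R₀ ^ d) ^ (1/q - 1/p) * (4:ℝ≥0∞) ^ (1/p)) := by
            rw [ENNReal.mul_rpow_of_ne_top ENNReal.ofReal_ne_top ωt,
              ENNReal.mul_rpow_of_nonneg 4 ω (by positivity : (0:ℝ) ≤ 1/p),
              ← my_om_fact (p := p) (q := q) ω ω0 ωt]
            ring
        _ ≤ 1 * 1 := by
            rw [hεω]
            gcongr
        _ = 1 := one_mul 1
  refine le_antisymm ?_ ?_
  · exact iSup_le fun a => iSup_le fun R => iSup_le fun hR => key a R hR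
  · have hsub : S ∩ ball (c 0) 1 = ball (c 0) 1 :=
      Set.inter_eq_self_of_subset_right (Set.subset_iUnion (fun i => ball (c i) 1) 0)
    have hwit : volume (ball (c 0) 1) ^ (1/q - 1/p) *
        (∫⁻ y in ball (c 0) 1, ENNReal.ofReal (|f y| ^ p)) ^ (1/p) = 1 := by
      rw [hint, my_rpow_fact hε.le hp0, hsub,
        hvol (c 0) 1 zero_le_one, one_pow, ENNReal.ofReal_one, one_mul]
      calc ω ^ (1/q - 1/p) * (ENNReal.ofReal ε * ω ^ (1/p))
          = ENNReal.ofReal ε * (ω ^ (1/q - 1/p) * ω ^ (1/p)) := by ring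
        _ = ENNReal.ofReal ε * ω ^ (1/q) := by rw [my_om_fact ω ω0 ωt]
        _ = 1 := hεω
    rw [morreyNorm]
    exact le_iSup_of_le (c 0) (le_iSup_of_le 1 (le_iSup_of_le one_pos hwit.ge))

lemma morrey_three_le (d : ℕ) (p q : ℝ) (hp : 1 ≤ p) (hpq : p < q) (hd : 1 ≤ d)
    (ε : ℝ) (hε : 0 < ε)
    (hεω : ENNReal.ofReal ε * (volume (ball (0:EuclideanSpace ℝ (Fin d)) 1)) ^ (1/q) = 1)
    (x₀ : EuclideanSpace ℝ (Fin d)) (g : EuclideanSpace ℝ (Fin d) → ℝ)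
    (hg : ∀ y ∈ ball x₀ 1, |g y| = 3 * ε) :
    (3:ℝ≥0∞) ≤ morreyNorm d p q g := by
  haveI : NeZero d := ⟨by omega⟩
  have hp0 : 0 < p := lt_of_lt_of_le one_pos hp
  have hq0 : 0 < q := hp0.trans hpq
  set ω := volume (ball (0:EuclideanSpace ℝ (Fin d)) 1) with hωdef
  have ω0 : ω ≠ 0 := (measure_ball_pos _ _ one_pos).ne'
  have ωt : ω ≠ ⊤ := measure_ball_lt_top.ne
  have hvol1 : volume (ball x₀ 1) = ω := by
    rw [Measure.addHaar_ball volume x₀ zero_le_one, finrank_euclideanSpace_fin, one_pow,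
      ENNReal.ofReal_one, one_mul]
  have hint : ∫⁻ y in ball x₀ 1, ENNReal.ofReal (|g y| ^ p) =
      ENNReal.ofReal ((3 * ε) ^ p) * ω := by
    rw [setLIntegral_congr_fun (f := fun y => ENNReal.ofReal (|g y| ^ p))
      (g := fun _ => ENNReal.ofReal ((3 * ε) ^ p)) measurableSet_ball
      (fun y hy => by simp only [hg y hy]), setLIntegral_const, hvol1]
  have hterm : volume (ball x₀ 1) ^ (1/q - 1/p) *
      (∫⁻ y in ball x₀ 1, ENNReal.ofReal (|g y| ^ p)) ^ (1/p) = 3 := by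
    rw [hint, hvol1, my_rpow_fact (by positivity) hp0]
    calc ω ^ (1/q - 1/p) * (ENNReal.ofReal (3 * ε) * ω ^ (1/p))
        = ENNReal.ofReal (3 * ε) * (ω ^ (1/q - 1/p) * ω ^ (1/p)) := by ring
      _ = ENNReal.ofReal 3 * (ENNReal.ofReal ε * ω ^ (1/q)) := by
          rw [my_om_fact ω ω0 ωt, ENNReal.ofReal_mul (by norm_num)]
          ring
      _ = 3 := by rw [hεω, mul_one]; norm_num
  rw [morreyNorm]
  exact le_iSup_of_le x₀ (le_iSup_of_le 1 (le_iSup_of_le one_pos hterm.ge))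


/-- the Morrey space is not uniformly non-octahedral: for every
`δ > 0` there are `F, K, U` of Morrey norm 1 with `‖F ± K ± U‖ > 3(1-δ)` for all
four choices of signs. -/
theorem morrey_not_uniformly_nonOctahedral (d : ℕ) (p q : ℝ) (hp : 1 ≤ p)
    (hpq : p < q) (hd : 1 ≤ d) :
    ∀ δ : ℝ, 0 < δ →
      ∃ F K U : EuclideanSpace ℝ (Fin d) → ℝ,
        morreyNorm d p q F = 1 ∧ morreyNorm d p q K = 1 ∧ morreyNorm d p q U = 1 ∧
          ∀ s t : ℝ, (s = 1 ∨ s = -1) → (t = 1 ∨ t = -1) →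
            ENNReal.ofReal (3 * (1 - δ)) <
              morreyNorm d p q (fun x => F x + s * K x + t * U x) := by
  intro δ hδ
  haveI : NeZero d := ⟨by omega⟩
  have hp0 : 0 < p := lt_of_lt_of_le one_pos hp
  have hq0 : 0 < q := hp0.trans hpq
  set ω := volume (ball (0:EuclideanSpace ℝ (Fin d)) 1) with hωdef
  have ω0 : ω ≠ 0 := (measure_ball_pos _ _ one_pos).ne'
  have ωt : ω ≠ ⊤ := measure_ball_lt_top.ne
  have hωq0 : ω ^ (1/q) ≠ 0 := by
    simp only [ne_eq, ENNReal.rpow_eq_zero_iff, not_or, not_and, not_lt]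
    constructor
    · intro h; exact absurd h ω0
    · intro h; exact absurd h ωt
  have hωqt : ω ^ (1/q) ≠ ⊤ := ENNReal.rpow_ne_top_of_nonneg (by positivity) ωt
  set ε : ℝ := (ω ^ (1/q)).toReal⁻¹ with hεdef
  have htR : 0 < (ω ^ (1/q)).toReal := ENNReal.toReal_pos hωq0 hωqt
  have hε : 0 < ε := inv_pos.2 htR
  have hεω : ENNReal.ofReal ε * ω ^ (1/q) = 1 := by
    rw [hεdef, ENNReal.ofReal_inv_of_pos htR, ENNReal.ofReal_toReal hωqt]
    exact ENNReal.inv_mul_cancel hωq0 hωqt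
  obtain ⟨R₀, hR₀1, hR₀'⟩ := exists_R0 d p q hp hpq hd
  obtain ⟨v, hv⟩ : ∃ v : EuclideanSpace ℝ (Fin d), ‖v‖ = 1 :=
    exists_norm_eq _ zero_le_one
  set D : ℝ := 2 * R₀ + 2 with hDdef
  have hD0 : 0 < D := by linarith
  set c : Fin 4 → EuclideanSpace ℝ (Fin d) := fun i => (((i : ℕ) : ℝ) * D) • v with hc
  have hsep : ∀ i j, i ≠ j → 2 * R₀ + 2 ≤ dist (c i) (c j) := by
    intro i j hij
    have h1 : (1:ℝ) ≤ |((i : ℕ) : ℝ) - ((j : ℕ) : ℝ)| := by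
      have hne : ((i : ℕ) : ℤ) ≠ ((j : ℕ) : ℤ) := by
        simpa using fun h => hij (Fin.ext h)
      have := Int.one_le_abs (sub_ne_zero.2 hne)
      exact_mod_cast this
    have : dist (c i) (c j) = |((i : ℕ) : ℝ) - ((j : ℕ) : ℝ)| * D := by
      rw [hc]
      simp only
      rw [dist_eq_norm, ← sub_smul, norm_smul, hv, mul_one, Real.norm_eq_abs, ← sub_mul,
        abs_mul, abs_of_pos hD0]
    rw [this, hDdef]
    nlinarith
  have hdisj : ∀ i j, i ≠ j → ∀ x, x ∈ ball (c i) 1 → x ∉ ball (c j) 1 := by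
    intro i j hij x hxi hxj
    have hs := hsep i j hij
    rw [mem_ball] at hxi hxj
    have htri : dist (c i) (c j) ≤ dist x (c i) + dist x (c j) := dist_triangle_left _ _ _
    linarith
  set S := ⋃ i, ball (c i) 1 with hSdef
  have hsumval : ∀ (w : Fin 4 → ℝ) (i : Fin 4) (y : EuclideanSpace ℝ (Fin d)),
      y ∈ ball (c i) 1 →
      ∑ j, w j * (ball (c j) 1).indicator 1 y = w i := by
    intro w i y hy
    rw [Finset.sum_eq_single i]
    · rw [Set.indicator_of_mem hy, Pi.one_apply, mul_one]
    · intro j _ hji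
      rw [Set.indicator_of_notMem (hdisj i j (Ne.symm hji) y hy), mul_zero]
    · intro h; exact absurd (Finset.mem_univ i) h
  have habs : ∀ (w : Fin 4 → ℝ), (∀ i, |w i| = 1) →
      ∀ x, |∑ j, w j * (ball (c j) 1).indicator 1 x| = S.indicator 1 x := by
    intro w hw x
    by_cases hx : x ∈ S
    · obtain ⟨i, hi⟩ := Set.mem_iUnion.1 hx
      rw [hsumval w i x hi, hw i, Set.indicator_of_mem hx, Pi.one_apply]
    · have hnone : ∀ j, x ∉ ball (c j) 1 := fun j hj => hx (Set.mem_iUnion.2 ⟨j, hj⟩)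
      rw [Set.indicator_of_notMem hx]
      have : ∑ j, w j * (ball (c j) 1).indicator 1 x = 0 :=
        Finset.sum_eq_zero fun j _ => by
          rw [Set.indicator_of_notMem (hnone j), mul_zero]
      rw [this, abs_zero]
  set σ : Fin 4 → ℝ := ![1, 1, -1, -1] with hσ
  set τ : Fin 4 → ℝ := ![1, -1, 1, -1] with hτ
  have hσabs : ∀ i, |σ i| = 1 := by intro i; fin_cases i <;> simp [hσ]
  have hτabs : ∀ i, |τ i| = 1 := by intro i; fin_cases i <;> simp [hτ]
  have honeabs : ∀ i : Fin 4, |(fun _ : Fin 4 => (1:ℝ)) i| = 1 := fun i => abs_one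
  set F : EuclideanSpace ℝ (Fin d) → ℝ :=
    fun x => ε * ∑ j, (fun _ : Fin 4 => (1:ℝ)) j * (ball (c j) 1).indicator 1 x with hF
  set K : EuclideanSpace ℝ (Fin d) → ℝ :=
    fun x => ε * ∑ j, σ j * (ball (c j) 1).indicator 1 x with hK
  set U : EuclideanSpace ℝ (Fin d) → ℝ :=
    fun x => ε * ∑ j, τ j * (ball (c j) 1).indicator 1 x with hU
  have hindf : ∀ (g : EuclideanSpace ℝ (Fin d) → ℝ) (w : Fin 4 → ℝ),
      (∀ i, |w i| = 1) →
      (∀ x, g x = ε * ∑ j, w j * (ball (c j) 1).indicator 1 x) →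
      ∀ x, |g x| = ε * S.indicator 1 x := by
    intro g w hw hg x
    rw [hg x, abs_mul, abs_of_pos hε, habs w hw x]
  refine ⟨F, K, U,
    morrey_norm_eq_one d p q hp hpq hd R₀ hR₀1 hR₀' c hsep ε hε hεω F
      (hindf F _ honeabs (fun x => rfl)),
    morrey_norm_eq_one d p q hp hpq hd R₀ hR₀1 hR₀' c hsep ε hε hεω K
      (hindf K _ hσabs (fun x => rfl)),
    morrey_norm_eq_one d p q hp hpq hd R₀ hR₀1 hR₀' c hsep ε hε hεω U
      (hindf U _ hτabs (fun x => rfl)), ?_⟩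
  intro s t hs ht
  -- choose the index where signs line up
  obtain ⟨i₀, hsi, hti⟩ : ∃ i₀ : Fin 4, σ i₀ = s ∧ τ i₀ = t := by
    rcases hs with rfl | rfl <;> rcases ht with rfl | rfl
    · exact ⟨0, by simp [hσ], by simp [hτ]⟩
    · exact ⟨1, by simp [hσ], by simp [hτ]⟩
    · exact ⟨2, by simp [hσ], by simp [hτ]⟩
    · exact ⟨3, by simp [hσ], by simp [hτ]⟩
  have hs2 : s * s = 1 := by rcases hs with rfl | rfl <;> norm_num
  have ht2 : t * t = 1 := by rcases ht with rfl | rfl <;> norm_num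
  have hG : ∀ y ∈ ball (c i₀) 1, |F y + s * K y + t * U y| = 3 * ε := by
    intro y hy
    rw [hF, hK, hU]
    simp only
    rw [hsumval _ i₀ y hy, hsumval σ i₀ y hy, hsumval τ i₀ y hy, hsi, hti]
    have : ε * 1 + s * (ε * s) + t * (ε * t) = 3 * ε := by
      nlinarith [hs2, ht2]
    rw [this, abs_of_pos (by positivity)]
  have h3 : (3:ℝ≥0∞) ≤ morreyNorm d p q (fun x => F x + s * K x + t * U x) :=
    morrey_three_le d p q hp hpq hd ε hε hεω (c i₀) _ hG
  refine lt_of_lt_of_le ?_ h3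
  rw [show (3:ℝ≥0∞) = ENNReal.ofReal 3 by norm_num]
  exact (ENNReal.ofReal_lt_ofReal_iff (by norm_num)).2 (by nlinarith)
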